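/- Let h be a real-valued harmonic function on 𝔻 with h(0) = 0 and h(z) ≤ C·Λ(1−|z|) for all z ∈ 𝔻, with Fourier expansion h(re^{iθ}) = Σ_{n∈ℤ} aₙ r^{|n|} e^{inθ}. Then there is a constant C₁ such that |aₙ| ≤ C₁ Λ(1/|n|) for all n with |n| ≥ 2. -/

import Mathlib

open Filter Set
open scoped Topology

open MeasureTheory Complex

lemma norm_term (a : ℤ → ℂ) (r : ℝ) (hr : 0 ≤ r) (n : ℤ) (θ : ℝ) :
    ‖a n * (r : ℂ) ^ n.natAbs * Complex.exp (Complex.I * n * θ)‖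
      = ‖a n‖ * r ^ n.natAbs := by
  rw [norm_mul, norm_mul]
  have h1 : ‖((r:ℂ)) ^ n.natAbs‖ = r ^ n.natAbs := by
    rw [norm_pow, Complex.norm_real, Real.norm_of_nonneg hr]
  have h2 : ‖Complex.exp (Complex.I * n * θ)‖ = 1 := by
    rw [Complex.norm_exp]
    simp
  rw [h1, h2, mul_one]

lemma key_integral (a : ℤ → ℂ) (r : ℝ) (hr : 0 ≤ r)
    (hsum : Summable fun n : ℤ => ‖a n‖ * r ^ n.natAbs) (k : ℤ) :
    ∫ θ in Set.Ioc (0:ℝ) (2*Real.pi),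
        (∑' n : ℤ, a n * (r : ℂ) ^ n.natAbs * Complex.exp (Complex.I * n * θ))
          * Complex.exp (-(Complex.I * k * θ))
      = (2*Real.pi) * (a k * (r:ℂ) ^ k.natAbs) := by
  have hcont : ∀ n : ℤ, Continuous fun θ : ℝ =>
      a n * (r : ℂ) ^ n.natAbs * Complex.exp (Complex.I * n * θ) * Complex.exp (-(Complex.I * k * θ)) := by
    intro n; fun_prop
  have hnorm : ∀ (n : ℤ) (θ : ℝ), ‖a n * (r : ℂ) ^ n.natAbs * Complex.exp (Complex.I * n * θ)
      * Complex.exp (-(Complex.I * k * θ))‖ = ‖a n‖ * r ^ n.natAbs := by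
    intro n θ
    rw [norm_mul, norm_term a r hr]
    have h2 : ‖Complex.exp (-(Complex.I * k * θ))‖ = 1 := by
      rw [Complex.norm_exp]
      simp
    rw [h2, mul_one]
  have hvol : ((volume (Set.Ioc (0:ℝ) (2*Real.pi))).toReal) = 2*Real.pi := by
    rw [Real.volume_Ioc, sub_zero, ENNReal.toReal_ofReal (by positivity)]
  have hint : ∀ n : ℤ, IntegrableOn (fun θ : ℝ =>
      a n * (r : ℂ) ^ n.natAbs * Complex.exp (Complex.I * n * θ) * Complex.exp (-(Complex.I * k * θ)))
      (Set.Ioc (0:ℝ) (2*Real.pi)) := by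
    intro n
    exact (hcont n).integrableOn_Ioc
  have hswap := MeasureTheory.integral_tsum_of_summable_integral_norm (μ := volume.restrict (Set.Ioc (0:ℝ) (2*Real.pi)))
      (F := fun (n : ℤ) (θ : ℝ) =>
        a n * (r : ℂ) ^ n.natAbs * Complex.exp (Complex.I * n * θ) * Complex.exp (-(Complex.I * k * θ)))
      hint ?_
  · have heq : ∀ θ : ℝ, (∑' n : ℤ, a n * (r : ℂ) ^ n.natAbs * Complex.exp (Complex.I * n * θ))
          * Complex.exp (-(Complex.I * k * θ))
        = ∑' n : ℤ, a n * (r : ℂ) ^ n.natAbs * Complex.exp (Complex.I * n * θ)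
          * Complex.exp (-(Complex.I * k * θ)) := by
      intro θ; exact (tsum_mul_right).symm
    rw [show (∫ θ in Set.Ioc (0:ℝ) (2*Real.pi),
        (∑' n : ℤ, a n * (r : ℂ) ^ n.natAbs * Complex.exp (Complex.I * n * θ))
          * Complex.exp (-(Complex.I * k * θ)))
      = ∫ θ in Set.Ioc (0:ℝ) (2*Real.pi),
        (∑' n : ℤ, a n * (r : ℂ) ^ n.natAbs * Complex.exp (Complex.I * n * θ)
          * Complex.exp (-(Complex.I * k * θ))) from by simp_rw [heq]]
    rw [← hswap]
    have hterm : ∀ n : ℤ, (∫ θ in Set.Ioc (0:ℝ) (2*Real.pi),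
        a n * (r : ℂ) ^ n.natAbs * Complex.exp (Complex.I * n * θ) * Complex.exp (-(Complex.I * k * θ)))
        = if n = k then (2*Real.pi) * (a k * (r:ℂ) ^ k.natAbs) else 0 := by
      intro n
      have hexp : ∀ θ : ℝ, Complex.exp (Complex.I * n * θ) * Complex.exp (-(Complex.I * k * θ))
          = Complex.exp ((Complex.I * ((n:ℂ) - k)) * θ) := by
        intro θ; rw [← Complex.exp_add]; congr 1; ring
      have hfull : ∀ θ : ℝ, a n * (r : ℂ) ^ n.natAbs * Complex.exp (Complex.I * n * θ)
          * Complex.exp (-(Complex.I * k * θ))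
          = (a n * (r : ℂ) ^ n.natAbs) * Complex.exp ((Complex.I * ((n:ℂ) - k)) * θ) := by
        intro θ; rw [mul_assoc (a n * (r : ℂ) ^ n.natAbs), hexp θ]
      simp_rw [hfull, MeasureTheory.integral_const_mul]
      by_cases h : n = k
      · subst h
        rw [if_pos rfl]
        simp only [sub_self, mul_zero, zero_mul, Complex.exp_zero]
        rw [MeasureTheory.setIntegral_const, measureReal_def, hvol]
        simp only [Complex.real_smul, mul_one]
        push_cast
        ring
      · rw [if_neg h]
        have hc : (Complex.I * ((n:ℂ) - k)) ≠ 0 := by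
          refine mul_ne_zero Complex.I_ne_zero (sub_ne_zero.mpr ?_)
          exact_mod_cast h
        rw [← intervalIntegral.integral_of_le (by positivity : (0:ℝ) ≤ 2*Real.pi),
          integral_exp_mul_complex hc]
        have h1 : Complex.exp (Complex.I * ((n:ℂ) - k) * (2 * (Real.pi : ℂ))) = 1 := by
          have h2 := Complex.exp_int_mul_two_pi_mul_I (n - k)
          rw [← h2]; congr 1; push_cast; ring
        simp [h1]
    simp_rw [hterm]
    exact tsum_ite_eq k _
  · simp_rw [hnorm]
    apply Summable.of_nonneg_of_le (fun n => integral_nonneg (fun θ => by positivity))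
      (fun n => ?_) (hsum.mul_left (2*Real.pi))
    rw [MeasureTheory.setIntegral_const, smul_eq_mul, measureReal_def, hvol]

lemma coeff_bound (Λ : ℝ → ℝ)
    (hpos : ∀ t ∈ Set.Ioc (0:ℝ) 1, 0 < Λ t)
    (a : ℤ → ℂ) (C : ℝ) (ha0 : a 0 = 0)
    (r : ℝ) (hr0 : 0 ≤ r) (hr1 : r < 1)
    (hsumr : Summable fun n : ℤ => ‖a n‖ * r ^ n.natAbs)
    (hrealr : ∀ θ : ℝ,
      (∑' n : ℤ, a n * (r : ℂ) ^ n.natAbs * Complex.exp (Complex.I * n * θ)).im = 0)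
    (hboundr : ∀ θ : ℝ,
      (∑' n : ℤ, a n * (r : ℂ) ^ n.natAbs * Complex.exp (Complex.I * n * θ)).re
        ≤ C * Λ (1 - r)) (k : ℤ) :
    ‖a k‖ * r ^ k.natAbs ≤ 2 * (|C| * Λ (1 - r)) := by
  have hπ : (0:ℝ) < 2*Real.pi := by positivity
  set M : ℝ := |C| * Λ (1 - r) with hMdef
  have hΛpos : 0 < Λ (1 - r) := hpos _ ⟨by linarith, by linarith⟩
  have hM : 0 ≤ M := by positivity
  set F : ℝ → ℂ := fun θ => ∑' n : ℤ, a n * (r : ℂ) ^ n.natAbs * Complex.exp (Complex.I * n * θ)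
    with hF
  set u : ℝ → ℝ := fun θ => (F θ).re with hu
  have hFu : ∀ θ, F θ = ((u θ : ℝ) : ℂ) := by
    intro θ
    apply Complex.ext
    · simp [hu]
    · simpa [hu, hF] using hrealr θ
  have hFcont : Continuous F := by
    rw [hF]
    apply continuous_tsum (fun n => by fun_prop) hsumr
    intro n θ
    exact le_of_eq (norm_term a r hr0 n θ)
  have hucont : Continuous u := Complex.continuous_re.comp hFcont
  have hvol : ((MeasureTheory.volume (Set.Ioc (0:ℝ) (2*Real.pi))).toReal) = 2*Real.pi := by
    rw [Real.volume_Ioc, sub_zero, ENNReal.toReal_ofReal (by positivity)]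
  have hu_le : ∀ θ, u θ ≤ M := by
    intro θ
    refine le_trans (hboundr θ) ?_
    exact mul_le_mul_of_nonneg_right (le_abs_self C) hΛpos.le
  have hIF : ∫ θ in Set.Ioc (0:ℝ) (2*Real.pi), F θ = 0 := by
    simp only [hF]
    simpa [ha0] using key_integral a r hr0 hsumr 0
  have hIu : ∫ θ in Set.Ioc (0:ℝ) (2*Real.pi), u θ = 0 := by
    have heq : ((∫ θ in Set.Ioc (0:ℝ) (2*Real.pi), u θ : ℝ) : ℂ)
        = ∫ θ in Set.Ioc (0:ℝ) (2*Real.pi), F θ := by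
      rw [show ((∫ θ in Set.Ioc (0:ℝ) (2*Real.pi), u θ : ℝ) : ℂ)
          = ∫ θ in Set.Ioc (0:ℝ) (2*Real.pi), ((u θ : ℝ) : ℂ) from (integral_ofReal (𝕜 := ℂ) (f := u)).symm]
      exact MeasureTheory.integral_congr_ae (Filter.Eventually.of_forall fun θ => (hFu θ).symm)
    rw [hIF] at heq
    exact_mod_cast heq
  have hmax_int : MeasureTheory.IntegrableOn (fun θ => max (u θ) 0) (Set.Ioc (0:ℝ) (2*Real.pi)) :=
    (hucont.max continuous_const).integrableOn_Ioc
  have hu_int : MeasureTheory.IntegrableOn u (Set.Ioc (0:ℝ) (2*Real.pi)) :=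
    hucont.integrableOn_Ioc
  have hImax : ∫ θ in Set.Ioc (0:ℝ) (2*Real.pi), max (u θ) 0 ≤ 2*Real.pi * M := by
    have hmono := MeasureTheory.setIntegral_mono (μ := MeasureTheory.volume)
      (s := Set.Ioc (0:ℝ) (2*Real.pi)) (f := fun θ => max (u θ) 0) (g := fun _ => M)
      hmax_int ((MeasureTheory.integrableOn_const_iff).mpr (Or.inr (by
        rw [Real.volume_Ioc]; exact ENNReal.ofReal_lt_top)))
      (fun θ => max_le (hu_le θ) hM)
    rwa [MeasureTheory.setIntegral_const, smul_eq_mul, measureReal_def, hvol] at hmono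
  have hIabs : ∫ θ in Set.Ioc (0:ℝ) (2*Real.pi), |u θ| ≤ 2*(2*Real.pi*M) := by
    have hid : ∀ θ, |u θ| = 2 * max (u θ) 0 - u θ := by
      intro θ
      rcases le_total (u θ) 0 with h | h
      · rw [abs_of_nonpos h, max_eq_right h]; ring
      · rw [_root_.abs_of_nonneg h, max_eq_left h]; ring
    calc ∫ θ in Set.Ioc (0:ℝ) (2*Real.pi), |u θ|
        = ∫ θ in Set.Ioc (0:ℝ) (2*Real.pi), (2 * max (u θ) 0 - u θ) := by simp_rw [hid]
      _ = 2 * (∫ θ in Set.Ioc (0:ℝ) (2*Real.pi), max (u θ) 0)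
          - ∫ θ in Set.Ioc (0:ℝ) (2*Real.pi), u θ := by
          rw [MeasureTheory.integral_sub (hmax_int.const_mul 2) hu_int,
            MeasureTheory.integral_const_mul]
      _ ≤ 2*(2*Real.pi*M) := by rw [hIu]; linarith
  have hkey : ∫ θ in Set.Ioc (0:ℝ) (2*Real.pi), F θ * Complex.exp (-(Complex.I * k * θ))
      = (2*Real.pi) * (a k * (r:ℂ) ^ k.natAbs) := key_integral a r hr0 hsumr k
  have hnormval : ‖((2*Real.pi : ℝ) : ℂ) * (a k * (r:ℂ) ^ k.natAbs)‖
      = 2*Real.pi * (‖a k‖ * r ^ k.natAbs) := by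
    rw [norm_mul, norm_mul, norm_pow, Complex.norm_real, Complex.norm_real,
      Real.norm_of_nonneg hπ.le, Real.norm_of_nonneg hr0]
  have hnorm_le : 2*Real.pi * (‖a k‖ * r ^ k.natAbs)
      ≤ ∫ θ in Set.Ioc (0:ℝ) (2*Real.pi), |u θ| := by
    calc 2*Real.pi * (‖a k‖ * r ^ k.natAbs)
        = ‖((2*Real.pi : ℝ) : ℂ) * (a k * (r:ℂ) ^ k.natAbs)‖ := hnormval.symm
      _ = ‖∫ θ in Set.Ioc (0:ℝ) (2*Real.pi), F θ * Complex.exp (-(Complex.I * k * θ))‖ := by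
          rw [hkey]; norm_num
      _ ≤ ∫ θ in Set.Ioc (0:ℝ) (2*Real.pi), ‖F θ * Complex.exp (-(Complex.I * k * θ))‖ :=
          MeasureTheory.norm_integral_le_integral_norm _
      _ = ∫ θ in Set.Ioc (0:ℝ) (2*Real.pi), |u θ| := by
          refine MeasureTheory.integral_congr_ae (Filter.Eventually.of_forall fun θ => ?_)
          show ‖F θ * Complex.exp (-(Complex.I * k * θ))‖ = |u θ|
          rw [norm_mul, hFu θ, Complex.norm_real, Real.norm_eq_abs]
          have : ‖Complex.exp (-(Complex.I * k * θ))‖ = 1 := by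
            rw [Complex.norm_exp]; simp
          rw [this, mul_one]
  have hfinal : 2*Real.pi * (‖a k‖ * r ^ k.natAbs) ≤ 2*Real.pi * (2 * M) := by
    calc 2*Real.pi * (‖a k‖ * r ^ k.natAbs)
        ≤ ∫ θ in Set.Ioc (0:ℝ) (2*Real.pi), |u θ| := hnorm_le
      _ ≤ 2*(2*Real.pi*M) := hIabs
      _ = 2*Real.pi*(2*M) := by ring
  exact le_of_mul_le_mul_left hfinal hπ

lemma exp_neg_two_mul_le {t : ℝ} (ht0 : 0 < t) (ht : t ≤ 1/2) :
    Real.exp (-(2*t)) ≤ 1 - t := by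
  have h1 : 2*t + 1 ≤ Real.exp (2*t) := Real.add_one_le_exp (2*t)
  have h2 : (1:ℝ) ≤ (1 - t) * Real.exp (2*t) := by nlinarith
  rw [Real.exp_neg, ← one_div, div_le_iff₀ (Real.exp_pos _)]
  linarith

/-- If a real-valued harmonic function `h(re^{iθ}) = Σ_{n∈ℤ} aₙ r^{|n|} e^{inθ}`
on the disk satisfies `h(0) = 0` and `h ≤ C Λ(1−r)`, then
`|aₙ| ≤ C₁ Λ(1/|n|)` for `|n| ≥ 2`. -/
theorem stmt8 (Λ : ℝ → ℝ)
    (hpos : ∀ t ∈ Set.Ioc (0:ℝ) 1, 0 < Λ t)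
    (hanti : AntitoneOn Λ (Set.Ioc 0 1))
    (a : ℤ → ℂ) (C : ℝ) (ha0 : a 0 = 0)
    (hsum : ∀ r ∈ Set.Ico (0:ℝ) 1,
      Summable fun n : ℤ => ‖a n‖ * r ^ n.natAbs)
    (hreal : ∀ r ∈ Set.Ico (0:ℝ) 1, ∀ θ : ℝ,
      (∑' n : ℤ, a n * (r : ℂ) ^ n.natAbs * Complex.exp (Complex.I * n * θ)).im = 0)
    (hbound : ∀ r ∈ Set.Ico (0:ℝ) 1, ∀ θ : ℝ,
      (∑' n : ℤ, a n * (r : ℂ) ^ n.natAbs * Complex.exp (Complex.I * n * θ)).re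
        ≤ C * Λ (1 - r)) :
    ∃ C₁ : ℝ, ∀ n : ℤ, 2 ≤ n.natAbs →
      ‖a n‖ ≤ C₁ * Λ (1 / (n.natAbs : ℝ)) := by

  refine ⟨2 * Real.exp 2 * |C|, fun n hn => ?_⟩
  set m : ℕ := n.natAbs with hm
  have hm2 : (2:ℝ) ≤ (m:ℝ) := by exact_mod_cast hn
  have hm0 : (0:ℝ) < (m:ℝ) := by linarith
  set r : ℝ := 1 - 1/(m:ℝ) with hrdef
  have ht0 : 0 < 1/(m:ℝ) := by positivity
  have ht : 1/(m:ℝ) ≤ 1/2 := by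
    apply one_div_le_one_div_of_le <;> linarith
  have hr0 : 0 ≤ r := by rw [hrdef]; linarith
  have hr1 : r < 1 := by rw [hrdef]; linarith
  have h1r : 1 - r = 1/(m:ℝ) := by rw [hrdef]; ring
  have hb := coeff_bound Λ hpos a C ha0 r hr0 hr1 (hsum r ⟨hr0, hr1⟩)
    (fun θ => hreal r ⟨hr0, hr1⟩ θ) (fun θ => hbound r ⟨hr0, hr1⟩ θ) n
  rw [h1r, ← hm] at hb
  have hΛpos : 0 < Λ (1/(m:ℝ)) := hpos _ ⟨ht0, by linarith⟩
  have hstep : Real.exp (-(2 * (1/(m:ℝ)))) ≤ r := exp_neg_two_mul_le ht0 ht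
  have hrm : Real.exp (-2) ≤ r ^ m := by
    have hmne : (m:ℝ) ≠ 0 := ne_of_gt hm0
    calc Real.exp (-2) = Real.exp (-(2*(1/(m:ℝ)))) ^ m := by
          rw [← Real.exp_nat_mul]; congr 1; field_simp
      _ ≤ r ^ m := pow_le_pow_left₀ (Real.exp_pos _).le hstep m
  have habs : 0 ≤ ‖a n‖ := norm_nonneg _
  have h2 : ‖a n‖ * Real.exp (-2) ≤ 2 * (|C| * Λ (1/(m:ℝ))) :=
    le_trans (mul_le_mul_of_nonneg_left hrm habs) hb
  calc ‖a n‖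
      = ‖a n‖ * Real.exp (-2) * Real.exp 2 := by
        rw [mul_assoc, ← Real.exp_add]; norm_num
    _ ≤ 2 * (|C| * Λ (1/(m:ℝ))) * Real.exp 2 :=
        mul_le_mul_of_nonneg_right h2 (Real.exp_pos 2).le
    _ = 2 * Real.exp 2 * |C| * Λ (1/(m:ℝ)) := by ring
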